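/- Let G be a finite group, G₀ ⊴ G a normal subgroup, and H ≤ G with G = G₀H; set H₀ = H ∩ G₀. Let r be a prime and suppose the number of G₀-conjugacy classes of elements of order r in G₀ is strictly greater than the number of H₀-conjugacy classes of elements of order r in H₀. Then there exists an element y ∈ G₀ of order r such that y^G ∩ H = ∅. -/
import Mathlib


open scoped Pointwise

/-- Let `G` be a finite group, `G₀ ⊴ G`, `H ≤ G` with `G = G₀H`, and set
`H₀ = H ∩ G₀`. If for a prime `r` the number of `G₀`-classes of elements of
order `r` in `G₀` exceeds the number of `H₀`-classes of elements of order `r`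
in `H₀`, then some `y ∈ G₀` of order `r` satisfies `y^G ∩ H = ∅`. -/
theorem stmt_12 {G : Type*} [Group G] [Finite G]
    (G₀ H : Subgroup G) [G₀.Normal]
    (hfact : (G₀ : Set G) * (H : Set G) = Set.univ)
    (r : ℕ) (hr : r.Prime)
    (hcount : (ConjClasses.mk '' {g : ↥G₀ | orderOf g = r}).ncard >
      (ConjClasses.mk '' {g : ↥(H ⊓ G₀) | orderOf g = r}).ncard) :
    ∃ y : G, y ∈ G₀ ∧ orderOf y = r ∧ ∀ g : G, g * y * g⁻¹ ∉ H := by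
  set ι : ↥(H ⊓ G₀) →* ↥G₀ := Subgroup.inclusion inf_le_right with hι
  set F : ConjClasses ↥(H ⊓ G₀) → ConjClasses ↥G₀ := ConjClasses.map ι with hF
  set S₁ := ConjClasses.mk '' {g : ↥G₀ | orderOf g = r}
  set S₂ := ConjClasses.mk '' {g : ↥(H ⊓ G₀) | orderOf g = r}
  -- find a class in S₁ not in F '' S₂
  have hsub : ¬ (S₁ ⊆ F '' S₂) := by
    intro hsub
    have h1 : S₁.ncard ≤ (F '' S₂).ncard :=
      Set.ncard_le_ncard hsub (Set.toFinite _)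
    have h2 : (F '' S₂).ncard ≤ S₂.ncard := Set.ncard_image_le (Set.toFinite _)
    omega
  rw [Set.not_subset] at hsub
  obtain ⟨c, hc1, hc2⟩ := hsub
  obtain ⟨y', hy', rfl⟩ := hc1
  refine ⟨(y' : G), y'.2, ?_, ?_⟩
  · have := orderOf_injective G₀.subtype Subtype.coe_injective y'
    simpa [this] using hy'
  · intro g hg
    -- decompose g = h⁻¹ * u⁻¹ with u ∈ G₀, h ∈ H
    have : g⁻¹ ∈ (G₀ : Set G) * (H : Set G) := by rw [hfact]; trivial
    obtain ⟨u, hu, h, hh, huh⟩ := this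
    have hgeq : g = h⁻¹ * u⁻¹ := by
      rw [← inv_inv g, ← huh]; group
    set z : G := u⁻¹ * (y' : G) * u with hz
    have hzG₀ : z ∈ G₀ := G₀.mul_mem (G₀.mul_mem (G₀.inv_mem hu) y'.2) hu
    have hzH : z ∈ H := by
      have : z = h * (g * (y' : G) * g⁻¹) * h⁻¹ := by
        rw [hz, hgeq]; group
      rw [this]
      exact H.mul_mem (H.mul_mem hh hg) (H.inv_mem hh)
    have hzr : orderOf z = r := by
      have hsc : SemiconjBy u⁻¹ (y' : G) z := by
        show u⁻¹ * (y' : G) = z * u⁻¹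
        rw [hz]; group
      have h2 : orderOf (y' : G) = r := by
        have := orderOf_injective G₀.subtype Subtype.coe_injective y'
        simpa [this] using hy'
      rw [← hsc.orderOf_eq u⁻¹, h2]
    -- z as element of H ⊓ G₀
    set z₂ : ↥(H ⊓ G₀) := ⟨z, hzH, hzG₀⟩
    apply hc2
    refine ⟨ConjClasses.mk z₂, ⟨z₂, ?_, rfl⟩, ?_⟩
    · show orderOf z₂ = r
      rw [← hzr]
      exact (orderOf_injective (H ⊓ G₀).subtype Subtype.coe_injective z₂).symm
    · show ConjClasses.mk (ι z₂) = ConjClasses.mk y'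
      rw [ConjClasses.mk_eq_mk_iff_isConj, isConj_iff]
      refine ⟨(⟨u, hu⟩ : ↥G₀), ?_⟩
      ext
      show u * z * u⁻¹ = (y' : G)
      rw [hz]; group
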